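/- arXiv:2310.19021 — 2 statements merged into one kernel-verified Lean document; each statement's English description precedes it below -/
import Mathlib

section
/- Let V, A_1,…,A_m, c, n, H, Ric, Θ_p be as in the setting, and let r be a real number with Ric(X) ≥ r for every unit vector X ∈ V. Then for every integer p with 2 ≤ p ≤ n/2 and every orthonormal basis e_1,…,e_n of V one has Θ_p ≤ p(n−p)((n−1)(c+H²) − r − H²). (The combined estimate (12) in the proof of Proposition 2.) -/
open scoped RealInnerProductSpace

/-- The Ricci curvature at a point of a submanifold, expressed through the shape
operators `A_α` via the Gauss equation: for a unit vector `X`,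
`Ric X = (n-1)c + Σ_α tr(A_α)⟨A_α X, X⟩ − Σ_α ‖A_α X‖²`. -/
noncomputable def RicCurv {V : Type*} [NormedAddCommGroup V] [InnerProductSpace ℝ V]
    (m n : ℕ) (c : ℝ) (A : Fin m → V →ₗ[ℝ] V) (X : V) : ℝ :=
  ((n : ℝ) - 1) * c + (∑ α : Fin m, LinearMap.trace ℝ V (A α) * ⟪(A α) X, X⟫)
    - ∑ α : Fin m, ‖(A α) X‖ ^ 2

/-- The Lawson–Simons quantity `Θ_p` associated to an orthonormal basis
`e_1, …, e_n` and an integer `p`: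
`Θ_p = Σ_{i≤p} Σ_{j>p} (2 Σ_α ⟨A_α e_i, e_j⟩² − Σ_α ⟨A_α e_i, e_i⟩⟨A_α e_j, e_j⟩)`. -/
noncomputable def Theta {V : Type*} [NormedAddCommGroup V] [InnerProductSpace ℝ V]
    (m : ℕ) {n : ℕ} (p : ℕ) (A : Fin m → V →ₗ[ℝ] V)
    (e : OrthonormalBasis (Fin n) ℝ V) : ℝ :=
  ∑ i ∈ Finset.univ.filter (fun i : Fin n => (i : ℕ) < p),
    ∑ j ∈ Finset.univ.filter (fun j : Fin n => p ≤ (j : ℕ)),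
      (2 * ∑ α : Fin m, ⟪(A α) (e i), e j⟫ ^ 2
        - ∑ α : Fin m, ⟪(A α) (e i), e i⟫ * ⟪(A α) (e j), e j⟫)

/-- The quantity `T_p = Σ_α (tr A_α) Σ_{i≤p} ⟨A_α e_i, e_i⟩`. -/
noncomputable def Tsum {V : Type*} [NormedAddCommGroup V] [InnerProductSpace ℝ V]
    (m : ℕ) {n : ℕ} (p : ℕ) (A : Fin m → V →ₗ[ℝ] V)
    (e : OrthonormalBasis (Fin n) ℝ V) : ℝ :=
  ∑ α : Fin m, LinearMap.trace ℝ V (A α) *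
    ∑ i ∈ Finset.univ.filter (fun i : Fin n => (i : ℕ) < p), ⟪(A α) (e i), e i⟫

/-- The squared length `S = Σ_α tr(A_α²)` of the second fundamental form. -/
noncomputable def Ssec {V : Type*} [NormedAddCommGroup V] [InnerProductSpace ℝ V]
    (m : ℕ) (A : Fin m → V →ₗ[ℝ] V) : ℝ :=
  ∑ α : Fin m, LinearMap.trace ℝ V (A α ∘ₗ A α)

private lemma card_lt_filter (n p : ℕ) (hpn : p ≤ n) :
    (Finset.univ.filter (fun i : Fin n => (i : ℕ) < p)).card = p := by
  rw [Finset.card_filter, Fin.sum_univ_eq_sum_range (fun j => if j < p then 1 else 0),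
    ← Finset.card_filter]
  have : Finset.filter (fun j => j < p) (Finset.range n) = Finset.range p := by
    ext j; simp; omega
  simp [this]

private lemma card_le_filter (n p : ℕ) :
    (Finset.univ.filter (fun i : Fin n => p ≤ (i : ℕ))).card = n - p := by
  rw [Finset.card_filter, Fin.sum_univ_eq_sum_range (fun j => if p ≤ j then 1 else 0),
    ← Finset.card_filter]
  have : Finset.filter (fun j => p ≤ j) (Finset.range n) = Finset.Ico p n := by
    ext j; simp; omega
  simp [this]

private lemma trace_eq_sum {V : Type*} [NormedAddCommGroup V] [InnerProductSpace ℝ V]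
    [FiniteDimensional ℝ V] {n : ℕ} (e : OrthonormalBasis (Fin n) ℝ V) (T : V →ₗ[ℝ] V) :
    LinearMap.trace ℝ V T = ∑ k : Fin n, ⟪T (e k), e k⟫ := by
  rw [LinearMap.trace_eq_matrix_trace ℝ e.toBasis, Matrix.trace]
  congr 1; ext k
  rw [Matrix.diag_apply, LinearMap.toMatrix_apply, OrthonormalBasis.coe_toBasis,
    OrthonormalBasis.coe_toBasis_repr_apply, OrthonormalBasis.repr_apply_apply,
    real_inner_comm]

private lemma norm_sq_eq_sum' {V : Type*} [NormedAddCommGroup V] [InnerProductSpace ℝ V]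
    [FiniteDimensional ℝ V] {n : ℕ} (e : OrthonormalBasis (Fin n) ℝ V) (x : V) :
    ‖x‖^2 = ∑ k : Fin n, ⟪x, e k⟫^2 := by
  rw [← real_inner_self_eq_norm_sq, ← OrthonormalBasis.sum_inner_mul_inner e x x]
  congr 1; ext k; rw [sq, real_inner_comm x (e k)]

private lemma core (nn pp X dI dJ s u P Q : ℝ) (hp : 2 ≤ pp) (hn : 2*pp ≤ nn)
    (hX : 0 ≤ X) (hs : s^2 ≤ pp*dI) (hu : u^2 ≤ (nn-pp)*dJ)
    (hP : X + dI ≤ P) (hQ : X + dJ ≤ Q) :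
    nn^2*(nn-2)*(2*X - s*u) ≤
      (nn^2*pp*((nn-pp)-1) + nn*(nn-2*pp)^2)*P + (nn^2*(nn-pp)*(pp-1) + nn*(nn-2*pp)^2)*Q
      - ((nn^2*pp*((nn-pp)-1) + nn*(nn-2*pp)^2)*s + (nn^2*(nn-pp)*(pp-1) + nn*(nn-2*pp)^2)*u)*(s+u)
      + pp*(nn-pp)*(nn-2)^2*(s+u)^2 := by
  obtain ⟨q, hq⟩ : ∃ q : ℝ, q = nn - pp := ⟨_, rfl⟩
  obtain ⟨WI, hWIdef⟩ : ∃ w : ℝ, w = nn^2*pp*(q-1) + nn*(nn-2*pp)^2 := ⟨_, rfl⟩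
  obtain ⟨WJ, hWJdef⟩ : ∃ w : ℝ, w = nn^2*q*(pp-1) + nn*(nn-2*pp)^2 := ⟨_, rfl⟩
  have hq2 : 2 ≤ q := by rw [hq]; linarith
  have hn4 : 4 ≤ nn := by linarith
  have hnn : (0:ℝ) ≤ nn := by linarith
  have hsqn : (0:ℝ) ≤ nn*(nn-2*pp)^2 := mul_nonneg hnn (sq_nonneg _)
  have hWI : 0 ≤ WI := by
    rw [hWIdef]
    have : (0:ℝ) ≤ nn^2*pp*(q-1) :=
      mul_nonneg (mul_nonneg (sq_nonneg nn) (by linarith)) (by linarith)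
    linarith
  have hWJ : 0 ≤ WJ := by
    rw [hWJdef]
    have : (0:ℝ) ≤ nn^2*q*(pp-1) :=
      mul_nonneg (mul_nonneg (sq_nonneg nn) (by linarith)) (by linarith)
    linarith
  have hpq : (0:ℝ) < pp * q := by positivity
  have hcoefX : 2*nn^2*(nn-2) ≤ WI + WJ := by
    rw [hWIdef, hWJdef, hq]
    nlinarith [mul_nonneg (sub_nonneg.2 hp) (sub_nonneg.2 hn), sq_nonneg (nn-2*pp),
      mul_nonneg (mul_nonneg (sub_nonneg.2 hp) (sub_nonneg.2 hp)) (sub_nonneg.2 hn),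
      mul_nonneg (mul_nonneg (sub_nonneg.2 hp) (sub_nonneg.2 hn)) hnn]
  have t1 : 0 ≤ pp*q*WI*(P - X - dI) := by
    apply mul_nonneg (mul_nonneg hpq.le hWI); linarith
  have t2 : 0 ≤ pp*q*WJ*(Q - X - dJ) := by
    apply mul_nonneg (mul_nonneg hpq.le hWJ); linarith
  have t3 : 0 ≤ q*WI*(pp*dI - s^2) := by
    apply mul_nonneg (mul_nonneg (by linarith) hWI); rw [hq] at *; linarith
  have t4 : 0 ≤ pp*WJ*(q*dJ - u^2) := by
    apply mul_nonneg (mul_nonneg (by linarith) hWJ); rw [hq] at *; linarith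
  have t5 : 0 ≤ (WI + WJ - 2*nn^2*(nn-2))*(pp*q)*X :=
    mul_nonneg (mul_nonneg (by linarith) hpq.le) hX
  have t6 : 0 ≤ (nn-2*pp)^2*(q*s-pp*u)^2 := by positivity
  have key : 0 ≤ pp*q*((WI*P + WJ*Q - (WI*s + WJ*u)*(s+u) + pp*q*(nn-2)^2*(s+u)^2)
      - nn^2*(nn-2)*(2*X - s*u)) := by
    have hid : pp*q*((WI*P + WJ*Q - (WI*s + WJ*u)*(s+u) + pp*q*(nn-2)^2*(s+u)^2)
        - nn^2*(nn-2)*(2*X - s*u)) =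
        pp*q*WI*(P - X - dI) + pp*q*WJ*(Q - X - dJ) + q*WI*(pp*dI - s^2)
        + pp*WJ*(q*dJ - u^2) + (WI + WJ - 2*nn^2*(nn-2))*(pp*q)*X
        + (nn-2*pp)^2*(q*s-pp*u)^2 := by
      rw [hWIdef, hWJdef, hq]; ring
    rw [hid]; linarith
  have hfin : 0 ≤ (WI*P + WJ*Q - (WI*s + WJ*u)*(s+u) + pp*q*(nn-2)^2*(s+u)^2)
      - nn^2*(nn-2)*(2*X - s*u) := nonneg_of_mul_nonneg_right (by linarith [key]) hpq
  rw [hWIdef, hWJdef, hq] at hfin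
  linarith [hfin]

theorem ricci_lower_bound_theta_estimate {V : Type*} [NormedAddCommGroup V] [InnerProductSpace ℝ V]
    [FiniteDimensional ℝ V] (n m : ℕ)
    (hdim : Module.finrank ℝ V = n)
    (A : Fin m → V →ₗ[ℝ] V) (hsymm : ∀ α : Fin m, (A α).IsSymmetric)
    (c H : ℝ) (hH : 0 ≤ H)
    (hHdef : (n : ℝ) ^ 2 * H ^ 2 = ∑ α : Fin m, (LinearMap.trace ℝ V (A α)) ^ 2)
    (r : ℝ)
    (hRic : ∀ X : V, ‖X‖ = 1 → RicCurv m n c A X ≥ r) :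
    ∀ p : ℕ, 2 ≤ p → 2 * p ≤ n → ∀ e : OrthonormalBasis (Fin n) ℝ V,
      Theta m p A e ≤
        (p : ℝ) * ((n : ℝ) - p) * (((n : ℝ) - 1) * (c + H ^ 2) - r - H ^ 2) := by
  
  intro p hp2 hpn e
  classical
  have hpn' : p ≤ n := by omega
  have hn4 : 4 ≤ n := by omega
  set I : Finset (Fin n) := Finset.univ.filter (fun i : Fin n => (i : ℕ) < p) with hIdef
  set J : Finset (Fin n) := Finset.univ.filter (fun j : Fin n => p ≤ (j : ℕ)) with hJdef
  have hcardI : I.card = p := card_lt_filter n p hpn'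
  have hcardJ : J.card = n - p := card_le_filter n p
  have hsplit : ∀ g : Fin n → ℝ, ∑ k, g k = (∑ i ∈ I, g i) + (∑ j ∈ J, g j) := by
    intro g
    rw [hIdef, hJdef,
      ← Finset.sum_filter_add_sum_filter_not Finset.univ (fun i : Fin n => (i : ℕ) < p) g]
    congr 1
    apply Finset.sum_congr _ (fun _ _ => rfl)
    ext j; simp [not_lt]
  set h : Fin m → Fin n → Fin n → ℝ := fun α i j => ⟪A α (e i), e j⟫ with hhdef
  have hh : ∀ α i j, ⟪A α (e i), e j⟫ = h α i j := fun _ _ _ => rfl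
  have hsym : ∀ α i j, h α i j = h α j i := by
    intro α i j
    simp only [hhdef]
    rw [hsymm α (e i) (e j), real_inner_comm]
  set t : Fin m → ℝ := fun α => ∑ k, h α k k with htdef
  have htr : ∀ α, LinearMap.trace ℝ V (A α) = t α := fun α => trace_eq_sum e (A α)
  have hnormA : ∀ α k, ‖A α (e k)‖^2 = ∑ l, (h α k l)^2 := fun α k => norm_sq_eq_sum' e _
  have hRic' : ∀ k : Fin n, ∑ α, ((∑ l, (h α k l)^2) - t α * h α k k) ≤ ((n:ℝ)-1)*c - r := by
    intro k
    have h1 := hRic (e k) (e.orthonormal.1 k)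
    simp only [RicCurv] at h1
    rw [Finset.sum_sub_distrib]
    have e1 : ∑ α, ∑ l, (h α k l)^2 = ∑ α, ‖A α (e k)‖^2 :=
      Finset.sum_congr rfl (fun α _ => (hnormA α k).symm)
    have e2 : ∑ α : Fin m, t α * h α k k
        = ∑ α : Fin m, LinearMap.trace ℝ V (A α) * ⟪A α (e k), e k⟫ :=
      Finset.sum_congr rfl (fun α _ => by rw [htr, hh])
    rw [e1, e2]
    linarith [h1]
  -- per-alpha quantities
  set sF : Fin m → ℝ := fun α => ∑ i ∈ I, h α i i with hsF
  set uF : Fin m → ℝ := fun α => ∑ j ∈ J, h α j j with huF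
  set XF : Fin m → ℝ := fun α => ∑ i ∈ I, ∑ j ∈ J, (h α i j)^2 with hXF
  set dIF : Fin m → ℝ := fun α => ∑ i ∈ I, (h α i i)^2 with hdIF
  set dJF : Fin m → ℝ := fun α => ∑ j ∈ J, (h α j j)^2 with hdJF
  set PF : Fin m → ℝ := fun α => ∑ i ∈ I, ∑ l, (h α i l)^2 with hPF
  set QF : Fin m → ℝ := fun α => ∑ j ∈ J, ∑ l, (h α j l)^2 with hQF
  have htu : ∀ α, t α = sF α + uF α := fun α => hsplit (fun k => h α k k)
  have hXnn : ∀ α, 0 ≤ XF α := fun α =>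
    Finset.sum_nonneg (fun i _ => Finset.sum_nonneg (fun j _ => sq_nonneg _))
  have hs2 : ∀ α, (sF α)^2 ≤ (p:ℝ) * dIF α := by
    intro α
    have := sq_sum_le_card_mul_sum_sq (s := I) (f := fun i => h α i i)
    rwa [hcardI] at this
  have hu2 : ∀ α, (uF α)^2 ≤ ((n:ℝ)-(p:ℝ)) * dJF α := by
    intro α
    have := sq_sum_le_card_mul_sum_sq (s := J) (f := fun j => h α j j)
    rw [hcardJ] at this
    have hc : ((n - p : ℕ) : ℝ) = (n:ℝ) - (p:ℝ) := by
      push_cast [hpn']; ring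
    rwa [hc] at this
  have hP' : ∀ α, XF α + dIF α ≤ PF α := by
    intro α
    have hsplitP : PF α = (∑ i ∈ I, ∑ l ∈ I, (h α i l)^2) + XF α := by
      simp only [hPF, hXF, ← Finset.sum_add_distrib]
      exact Finset.sum_congr rfl (fun i _ => hsplit (fun l => (h α i l)^2))
    have hdiag : dIF α ≤ ∑ i ∈ I, ∑ l ∈ I, (h α i l)^2 :=
      Finset.sum_le_sum (fun i hi =>
        Finset.single_le_sum (fun l _ => sq_nonneg (h α i l)) hi)
    linarith [hsplitP, hdiag]
  have hQ' : ∀ α, XF α + dJF α ≤ QF α := by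
    intro α
    have hsplitQ : QF α = (∑ j ∈ J, ∑ l ∈ I, (h α j l)^2) + (∑ j ∈ J, ∑ l ∈ J, (h α j l)^2) := by
      simp only [hQF, ← Finset.sum_add_distrib]
      exact Finset.sum_congr rfl (fun j _ => hsplit (fun l => (h α j l)^2))
    have hcross : (∑ j ∈ J, ∑ l ∈ I, (h α j l)^2) = XF α := by
      rw [Finset.sum_comm]
      exact Finset.sum_congr rfl (fun i _ => Finset.sum_congr rfl
        (fun j _ => by rw [hsym α j i]))
    have hdiag : dJF α ≤ ∑ j ∈ J, ∑ l ∈ J, (h α j l)^2 :=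
      Finset.sum_le_sum (fun j hj =>
        Finset.single_le_sum (fun l _ => sq_nonneg (h α j l)) hj)
    linarith [hsplitQ, hcross, hdiag]
  -- summed Ricci inequalities
  have hsumI : ∑ α, (PF α - t α * sF α) ≤ (p:ℝ) * (((n:ℝ)-1)*c - r) := by
    calc ∑ α, (PF α - t α * sF α)
        = ∑ α : Fin m, ∑ i ∈ I, ((∑ l, (h α i l)^2) - t α * h α i i) :=
          Finset.sum_congr rfl (fun α _ => by
            rw [Finset.sum_sub_distrib, ← Finset.mul_sum])
      _ = ∑ i ∈ I, ∑ α : Fin m, ((∑ l, (h α i l)^2) - t α * h α i i) := Finset.sum_comm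
      _ ≤ ∑ i ∈ I, (((n:ℝ)-1)*c - r) := Finset.sum_le_sum (fun i _ => hRic' i)
      _ = (p:ℝ) * (((n:ℝ)-1)*c - r) := by
          rw [Finset.sum_const, hcardI, nsmul_eq_mul]
  have hsumJ : ∑ α, (QF α - t α * uF α) ≤ ((n:ℝ)-(p:ℝ)) * (((n:ℝ)-1)*c - r) := by
    calc ∑ α, (QF α - t α * uF α)
        = ∑ α : Fin m, ∑ j ∈ J, ((∑ l, (h α j l)^2) - t α * h α j j) :=
          Finset.sum_congr rfl (fun α _ => by
            rw [Finset.sum_sub_distrib, ← Finset.mul_sum])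
      _ = ∑ j ∈ J, ∑ α : Fin m, ((∑ l, (h α j l)^2) - t α * h α j j) := Finset.sum_comm
      _ ≤ ∑ j ∈ J, (((n:ℝ)-1)*c - r) := Finset.sum_le_sum (fun j _ => hRic' j)
      _ = ((n:ℝ)-(p:ℝ)) * (((n:ℝ)-1)*c - r) := by
          rw [Finset.sum_const, hcardJ, nsmul_eq_mul]
          push_cast [hpn']; ring
  -- real cast facts
  have hp2R : (2:ℝ) ≤ (p:ℝ) := by exact_mod_cast hp2
  have hnpR : 2*(p:ℝ) ≤ (n:ℝ) := by exact_mod_cast hpn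
  have hn4R : (4:ℝ) ≤ (n:ℝ) := by exact_mod_cast hn4
  obtain ⟨WI, hWIdef⟩ : ∃ w : ℝ,
      w = (n:ℝ)^2*(p:ℝ)*(((n:ℝ)-(p:ℝ))-1) + (n:ℝ)*((n:ℝ)-2*(p:ℝ))^2 := ⟨_, rfl⟩
  obtain ⟨WJ, hWJdef⟩ : ∃ w : ℝ,
      w = (n:ℝ)^2*((n:ℝ)-(p:ℝ))*((p:ℝ)-1) + (n:ℝ)*((n:ℝ)-2*(p:ℝ))^2 := ⟨_, rfl⟩
  have hWI0 : 0 ≤ WI := by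
    rw [hWIdef]
    have h1 : (0:ℝ) ≤ (n:ℝ)^2*(p:ℝ)*(((n:ℝ)-(p:ℝ))-1) :=
      mul_nonneg (mul_nonneg (sq_nonneg _) (by linarith)) (by linarith)
    have h2 : (0:ℝ) ≤ (n:ℝ)*((n:ℝ)-2*(p:ℝ))^2 := mul_nonneg (by linarith) (sq_nonneg _)
    linarith
  have hWJ0 : 0 ≤ WJ := by
    rw [hWJdef]
    have h1 : (0:ℝ) ≤ (n:ℝ)^2*((n:ℝ)-(p:ℝ))*((p:ℝ)-1) :=
      mul_nonneg (mul_nonneg (sq_nonneg _) (by linarith)) (by linarith)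
    have h2 : (0:ℝ) ≤ (n:ℝ)*((n:ℝ)-2*(p:ℝ))^2 := mul_nonneg (by linarith) (sq_nonneg _)
    linarith
  have hcore : ∀ α, (n:ℝ)^2*((n:ℝ)-2)*(2*XF α - sF α*uF α) ≤
      WI*PF α + WJ*QF α - (WI*sF α + WJ*uF α)*(sF α+uF α)
      + (p:ℝ)*((n:ℝ)-(p:ℝ))*((n:ℝ)-2)^2*(sF α+uF α)^2 := by
    intro α
    rw [hWIdef, hWJdef]
    exact core (n:ℝ) (p:ℝ) (XF α) (dIF α) (dJF α) (sF α) (uF α) (PF α) (QF α)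
      hp2R hnpR (hXnn α) (hs2 α) (hu2 α) (hP' α) (hQ' α)
  have hSt : ∑ α : Fin m, (t α)^2 = (n:ℝ)^2*H^2 := by
    rw [hHdef]
    exact Finset.sum_congr rfl (fun α _ => by rw [htr α])
  have hrhs : ∑ α : Fin m, (WI*PF α + WJ*QF α - (WI*sF α + WJ*uF α)*(sF α+uF α)
        + (p:ℝ)*((n:ℝ)-(p:ℝ))*((n:ℝ)-2)^2*(sF α+uF α)^2)
      = WI*(∑ α, (PF α - t α*sF α)) + WJ*(∑ α, (QF α - t α*uF α))
        + (p:ℝ)*((n:ℝ)-(p:ℝ))*((n:ℝ)-2)^2*(∑ α : Fin m, (t α)^2) := by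
    rw [Finset.mul_sum, Finset.mul_sum, Finset.mul_sum, ← Finset.sum_add_distrib,
      ← Finset.sum_add_distrib]
    apply Finset.sum_congr rfl
    intro α _
    rw [← htu α]
    ring
  have hbig : (n:ℝ)^2*((n:ℝ)-2)*(∑ α : Fin m, (2*XF α - sF α*uF α)) ≤
      WI*((p:ℝ)*(((n:ℝ)-1)*c - r)) + WJ*(((n:ℝ)-(p:ℝ))*(((n:ℝ)-1)*c - r))
      + (p:ℝ)*((n:ℝ)-(p:ℝ))*((n:ℝ)-2)^2*((n:ℝ)^2*H^2) := by
    rw [Finset.mul_sum]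
    calc ∑ α : Fin m, (n:ℝ)^2*((n:ℝ)-2)*(2*XF α - sF α*uF α)
        ≤ ∑ α : Fin m, (WI*PF α + WJ*QF α - (WI*sF α + WJ*uF α)*(sF α+uF α)
          + (p:ℝ)*((n:ℝ)-(p:ℝ))*((n:ℝ)-2)^2*(sF α+uF α)^2) :=
          Finset.sum_le_sum (fun α _ => hcore α)
      _ = WI*(∑ α, (PF α - t α*sF α)) + WJ*(∑ α, (QF α - t α*uF α))
          + (p:ℝ)*((n:ℝ)-(p:ℝ))*((n:ℝ)-2)^2*(∑ α : Fin m, (t α)^2) := hrhs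
      _ ≤ WI*((p:ℝ)*(((n:ℝ)-1)*c - r)) + WJ*(((n:ℝ)-(p:ℝ))*(((n:ℝ)-1)*c - r))
          + (p:ℝ)*((n:ℝ)-(p:ℝ))*((n:ℝ)-2)^2*((n:ℝ)^2*H^2) := by
          rw [hSt]
          have m1 := mul_le_mul_of_nonneg_left hsumI hWI0
          have m2 := mul_le_mul_of_nonneg_left hsumJ hWJ0
          linarith
  have hTheta : Theta m p A e = ∑ α : Fin m, (2*XF α - sF α*uF α) := by
    simp only [Theta, ← hIdef, ← hJdef, hh]
    calc ∑ i ∈ I, ∑ j ∈ J, (2 * ∑ α : Fin m, (h α i j)^2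
          - ∑ α : Fin m, h α i i * h α j j)
        = ∑ i ∈ I, ∑ j ∈ J, ∑ α : Fin m, (2*(h α i j)^2 - h α i i * h α j j) := by
          apply Finset.sum_congr rfl; intro i _
          apply Finset.sum_congr rfl; intro j _
          rw [Finset.mul_sum, ← Finset.sum_sub_distrib]
      _ = ∑ i ∈ I, ∑ α : Fin m, ∑ j ∈ J, (2*(h α i j)^2 - h α i i * h α j j) :=
          Finset.sum_congr rfl (fun i _ => Finset.sum_comm)
      _ = ∑ α : Fin m, ∑ i ∈ I, ∑ j ∈ J, (2*(h α i j)^2 - h α i i * h α j j) :=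
          Finset.sum_comm
      _ = ∑ α : Fin m, (2*XF α - sF α*uF α) := by
          apply Finset.sum_congr rfl; intro α _
          rw [Finset.sum_mul_sum I J (fun i => h α i i) (fun j => h α j j)]
          simp only [hXF, Finset.sum_sub_distrib, ← Finset.mul_sum]
  have hpos : (0:ℝ) < (n:ℝ)^2*((n:ℝ)-2) := by nlinarith
  have hfinal : (n:ℝ)^2*((n:ℝ)-2) * Theta m p A e ≤
      (n:ℝ)^2*((n:ℝ)-2) * ((p:ℝ) * ((n:ℝ) - p) * (((n:ℝ) - 1) * (c + H ^ 2) - r - H ^ 2)) := by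
    rw [hTheta]
    have hridentity : WI*((p:ℝ)*(((n:ℝ)-1)*c - r)) + WJ*(((n:ℝ)-(p:ℝ))*(((n:ℝ)-1)*c - r))
        + (p:ℝ)*((n:ℝ)-(p:ℝ))*((n:ℝ)-2)^2*((n:ℝ)^2*H^2)
        = (n:ℝ)^2*((n:ℝ)-2) * ((p:ℝ) * ((n:ℝ) - p) * (((n:ℝ) - 1) * (c + H ^ 2) - r - H ^ 2)) := by
      rw [hWIdef, hWJdef]; ring
    linarith [hbig]
  exact le_of_mul_le_mul_left hfinal hpos
end

section
/- Let V, A_1,…,A_m, c, n, H, S, Ric be as in the setting, with n ≥ 2. Assume Ric(X) ≥ (n(n−1)/(n+2))(c+H²) for every unit vector X ∈ V. Then S − nH² ≤ (2n(n−1)/(n+2))(c+H²). (Inequality (19) in the proof of Lemma 3; S − nH² is the squared length of the traceless second fundamental form.) -/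
open scoped RealInnerProductSpace

lemma trace_onb {V : Type*} [NormedAddCommGroup V] [InnerProductSpace ℝ V]
    [FiniteDimensional ℝ V] {n : ℕ} (e : OrthonormalBasis (Fin n) ℝ V)
    (T : V →ₗ[ℝ] V) :
    LinearMap.trace ℝ V T = ∑ i, ⟪T (e i), e i⟫ := by
  rw [LinearMap.trace_eq_matrix_trace ℝ e.toBasis, Matrix.trace]
  simp only [Matrix.diag, LinearMap.toMatrix_apply, e.coe_toBasis,
    e.coe_toBasis_repr_apply, e.repr_apply_apply]
  exact Finset.sum_congr rfl fun i _ => real_inner_comm _ _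

theorem traceless_second_fundamental_form_bound {V : Type*} [NormedAddCommGroup V] [InnerProductSpace ℝ V]
    [FiniteDimensional ℝ V] (n m : ℕ)
    (hdim : Module.finrank ℝ V = n)
    (A : Fin m → V →ₗ[ℝ] V) (hsymm : ∀ α : Fin m, (A α).IsSymmetric)
    (c H : ℝ) (hH : 0 ≤ H)
    (hHdef : (n : ℝ) ^ 2 * H ^ 2 = ∑ α : Fin m, (LinearMap.trace ℝ V (A α)) ^ 2)
    (hn : 2 ≤ n)
    (hRic : ∀ X : V, ‖X‖ = 1 →
      RicCurv m n c A X ≥ (n : ℝ) * ((n : ℝ) - 1) / ((n : ℝ) + 2) * (c + H ^ 2)) :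
    Ssec m A - (n : ℝ) * H ^ 2
      ≤ 2 * (n : ℝ) * ((n : ℝ) - 1) / ((n : ℝ) + 2) * (c + H ^ 2) := by
  let e : OrthonormalBasis (Fin n) ℝ V :=
    (stdOrthonormalBasis ℝ V).reindex (finCongr hdim)
  have hsum : ∑ i, RicCurv m n c A (e i)
      ≥ (n : ℝ) * ((n : ℝ) * ((n : ℝ) - 1) / ((n : ℝ) + 2) * (c + H ^ 2)) := by
    have h := fun i => hRic (e i) (e.orthonormal.1 i)
    calc (n : ℝ) * ((n : ℝ) * ((n : ℝ) - 1) / ((n : ℝ) + 2) * (c + H ^ 2))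
        = ∑ _i : Fin n, (n : ℝ) * ((n : ℝ) - 1) / ((n : ℝ) + 2) * (c + H ^ 2) := by
          simp [Finset.sum_const, mul_comm]
      _ ≤ ∑ i, RicCurv m n c A (e i) := Finset.sum_le_sum fun i _ => h i
  have hexp : ∑ i, RicCurv m n c A (e i)
      = (n : ℝ) * ((n : ℝ) - 1) * c + (n : ℝ) ^ 2 * H ^ 2 - Ssec m A := by
    unfold RicCurv
    rw [Finset.sum_sub_distrib, Finset.sum_add_distrib]
    congr 1
    · congr 1
      · simp only [Finset.sum_const, Finset.card_univ, Fintype.card_fin, nsmul_eq_mul]; ring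
      · rw [Finset.sum_comm]
        refine Eq.trans ?_ hHdef.symm
        refine Finset.sum_congr rfl fun α _ => ?_
        rw [← Finset.mul_sum, ← trace_onb e (A α), sq]
    · unfold Ssec
      rw [Finset.sum_comm]
      refine Finset.sum_congr rfl fun α _ => ?_
      rw [trace_onb e (A α ∘ₗ A α)]
      refine Finset.sum_congr rfl fun i _ => ?_
      rw [LinearMap.comp_apply, hsymm α, real_inner_self_eq_norm_sq]
  rw [hexp] at hsum
  have hpos : (0 : ℝ) < (n : ℝ) + 2 := by positivity
  have hn2 : (2 : ℝ) ≤ (n : ℝ) := by exact_mod_cast hn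
  rw [ge_iff_le, mul_comm, div_mul_eq_mul_div, div_mul_eq_mul_div, div_le_iff₀ hpos] at hsum
  rw [div_mul_eq_mul_div, le_div_iff₀ hpos]
  nlinarith [hsum]
end
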